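/- Let θ ≥ 1 and R ≥ 0 be real numbers, and let G, D be reals with G > θ + R and (G − R)/√θ ≤ D ≤ G + θ + R. Set γ = G/(D·(D+G)). Then D > 1, 0 < γ < 1, and γ·G − ω(γ·D) ≥ 1/10.6, where ω(a) = −a − log(1−a). (This is the per-iteration decrease guarantee of the approximate generalized Frank–Wolfe method in the large-gap case G^a > θ + R_g.) -/
import Mathlib


/-- `ω(a) = -a - log (1 - a)` (for `a < 1`). -/
noncomputable def omegaFn (a : ℝ) : ℝ := -a - Real.log (1 - a)

lemma log_three_halves_le : Real.log (3/2) ≤ 43/106 := by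
  rw [Real.log_le_iff_le_exp (by norm_num)]
  have h1 : (2.7182818283:ℝ) ≤ Real.exp 1 := le_of_lt Real.exp_one_gt_d9
  have h2 : ((3:ℝ)/2)^(106:ℕ) ≤ (Real.exp (43/106))^(106:ℕ) := by
    have e1 : (Real.exp ((43:ℝ)/106))^(106:ℕ) = Real.exp 43 := by
      rw [← Real.exp_nat_mul]; norm_num
    have e2 : Real.exp (43:ℝ) = (Real.exp 1)^(43:ℕ) := by
      rw [← Real.exp_nat_mul]; norm_num
    rw [e1, e2]
    calc ((3:ℝ)/2)^(106:ℕ) ≤ (2.7182818283:ℝ)^(43:ℕ) := by norm_num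
      _ ≤ (Real.exp 1)^(43:ℕ) := pow_le_pow_left₀ (by norm_num) h1 43
  exact le_of_pow_le_pow_left₀ (by norm_num) (Real.exp_pos _).le h2

/-- Per-iteration decrease guarantee of the approximate generalized Frank–Wolfe
method in the large-gap case `Gᵃ > θ + R_g`. -/
theorem stmt_4 (θ R G D : ℝ) (hθ : 1 ≤ θ) (hR : 0 ≤ R)
    (hG : θ + R < G) (hD1 : (G - R) / Real.sqrt θ ≤ D) (hD2 : D ≤ G + θ + R)
    (γ : ℝ) (hγ : γ = G / (D * (D + G))) :
    1 < D ∧ 0 < γ ∧ γ < 1 ∧ γ * G - omegaFn (γ * D) ≥ 1 / 10.6 := by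
  have hsp : 0 < Real.sqrt θ := Real.sqrt_pos.mpr (by linarith)
  have hs1 : 1 ≤ Real.sqrt θ := by
    rw [show (1:ℝ) = Real.sqrt 1 by simp]
    exact Real.sqrt_le_sqrt hθ
  have hD : 1 < D := by
    have h1 : θ / Real.sqrt θ < (G - R) / Real.sqrt θ :=
      (div_lt_div_iff_of_pos_right hsp).mpr (by linarith)
    have h2 : θ / Real.sqrt θ = Real.sqrt θ := by
      nth_rewrite 1 [← Real.sq_sqrt (by linarith : (0:ℝ) ≤ θ)]
      field_simp
    nlinarith
  have hG0 : 0 < G := by linarith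
  have hD0 : 0 < D := by linarith
  have hDG : 0 < D + G := by linarith
  have hDDG : 0 < D * (D + G) := by positivity
  have hγ0 : 0 < γ := by rw [hγ]; positivity
  have hγ1 : γ < 1 := by
    rw [hγ, div_lt_one hDDG]; nlinarith
  refine ⟨hD, hγ0, hγ1, ?_⟩
  -- key identity: γ*G - ω(γ*D) = G/D - log (1 + G/D)
  have h2 : γ * G + γ * D = G / D := by
    rw [hγ]; field_simp; ring
  have h3 : 1 - γ * D = 1 / (1 + G / D) := by
    rw [hγ]; field_simp; ring
  have hlog : Real.log (1 - γ * D) = - Real.log (1 + G / D) := by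
    rw [h3, one_div, Real.log_inv]
  have hu : 1/2 < G / D := by
    rw [lt_div_iff₀ hD0]; linarith
  -- bound:  log (1 + u) ≤ log (3/2) + (2/3)*(1+u) - 1
  have hsplit : Real.log (1 + G / D) =
      Real.log (3/2) + Real.log ((2/3) * (1 + G / D)) := by
    rw [← Real.log_mul (by norm_num) (by positivity)]
    ring_nf
  have hle : Real.log ((2/3) * (1 + G / D)) ≤ (2/3) * (1 + G / D) - 1 :=
    Real.log_le_sub_one_of_pos (by positivity)
  have hlog32 := log_three_halves_le
  unfold omegaFn
  rw [hlog]
  have : (1:ℝ)/10.6 = 43/106 - (43/106 - 1/10.6) := by ring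
  nlinarith [hu, hle, hlog32, h2, hsplit]
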